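/- Let c ≥ 0 be a real number and define h : (0,∞) → ℝ by h(ρ) = (cosh ρ + c)^(−1/2). Then for every ρ > 0: 2·( h''(ρ) + (cosh ρ / sinh ρ)·h'(ρ) ) / h(ρ) = −( 1/2 + c/(cosh ρ + c) + (3/2)·(1−c²)/(cosh ρ + c)² ). -/

import Mathlib

open Real

lemma upos (c : ℝ) (hc : 0 ≤ c) (t : ℝ) : 0 < Real.cosh t + c := by
  have := Real.cosh_pos (x := t); linarith

lemma d1 (c : ℝ) (hc : 0 ≤ c) (t : ℝ) :
    HasDerivAt (fun t : ℝ => (Real.cosh t + c) ^ (-(1 / 2) : ℝ))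
      (Real.sinh t * (-(1 / 2)) * (Real.cosh t + c) ^ (-(3 / 2) : ℝ)) t := by
  have h := ((Real.hasDerivAt_cosh t).add_const c).rpow_const
    (p := (-(1 / 2) : ℝ)) (Or.inl (ne_of_gt (upos c hc t)))
  convert h using 2
  norm_num

lemma deriv1 (c : ℝ) (hc : 0 ≤ c) :
    deriv (fun t : ℝ => (Real.cosh t + c) ^ (-(1 / 2) : ℝ))
      = fun t => Real.sinh t * (-(1 / 2)) * (Real.cosh t + c) ^ (-(3 / 2) : ℝ) := by
  funext t; exact (d1 c hc t).deriv

lemma d2 (c : ℝ) (hc : 0 ≤ c) (t : ℝ) :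
    HasDerivAt (fun t : ℝ => Real.sinh t * (-(1 / 2)) * (Real.cosh t + c) ^ (-(3 / 2) : ℝ))
      (Real.cosh t * (-(1 / 2)) * (Real.cosh t + c) ^ (-(3 / 2) : ℝ)
        + Real.sinh t * (-(1 / 2)) * (Real.sinh t * (-(3 / 2)) * (Real.cosh t + c) ^ (-(5 / 2) : ℝ))) t := by
  have h2 := ((Real.hasDerivAt_cosh t).add_const c).rpow_const
    (p := (-(3 / 2) : ℝ)) (Or.inl (ne_of_gt (upos c hc t)))
  have h2' : HasDerivAt (fun t : ℝ => (Real.cosh t + c) ^ (-(3 / 2) : ℝ))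
      (Real.sinh t * (-(3 / 2)) * (Real.cosh t + c) ^ (-(5 / 2) : ℝ)) t := by
    convert h2 using 2; norm_num
  exact ((Real.hasDerivAt_sinh t).mul_const (-(1 / 2) : ℝ)).mul h2'

theorem radial_hyperbolic_laplacian_of_inverse_sqrt
    (c : ℝ) (hc : 0 ≤ c) :
    ∀ ρ : ℝ, 0 < ρ →
      2 * (deriv (deriv (fun t : ℝ => (Real.cosh t + c) ^ (-(1 / 2) : ℝ))) ρ
            + (Real.cosh ρ / Real.sinh ρ)
                * deriv (fun t : ℝ => (Real.cosh t + c) ^ (-(1 / 2) : ℝ)) ρ)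
          / (Real.cosh ρ + c) ^ (-(1 / 2) : ℝ)
        = -(1 / 2 + c / (Real.cosh ρ + c)
              + (3 / 2) * (1 - c ^ 2) / (Real.cosh ρ + c) ^ 2) := by
  intro ρ hρ
  have hu : 0 < Real.cosh ρ + c := upos c hc ρ
  have hs : Real.sinh ρ ≠ 0 := ne_of_gt (Real.sinh_pos_iff.2 hρ)
  rw [deriv1 c hc]
  rw [(d2 c hc ρ).deriv]
  beta_reduce
  set u := Real.cosh ρ + c with hudef
  have hA : (0:ℝ) < u ^ (-(1 / 2) : ℝ) := Real.rpow_pos_of_pos hu _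
  have h32 : u ^ (-(3 / 2) : ℝ) = u ^ (-(1 / 2) : ℝ) / u := by
    rw [show (-(3 / 2) : ℝ) = -(1/2) + (-1) by norm_num, Real.rpow_add hu,
      Real.rpow_neg_one]; ring
  have h52 : u ^ (-(5 / 2) : ℝ) = u ^ (-(1 / 2) : ℝ) / u ^ 2 := by
    rw [show (-(5 / 2) : ℝ) = -(1/2) + (-2) by norm_num, Real.rpow_add hu,
      show ((-2:ℝ)) = ((-2 : ℤ) : ℝ) by norm_num, Real.rpow_intCast, zpow_neg]
    field_simp
  have hc' : Real.cosh ρ = u - c := by rw [hudef]; ring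
  have hs2 : Real.sinh ρ ^ 2 = (u - c) ^ 2 - 1 := by
    rw [← hc']; linarith [Real.cosh_sq ρ]
  have key : 2 *
        (Real.cosh ρ * (-(1 / 2)) * u ^ (-(3 / 2) : ℝ)
            + Real.sinh ρ * (-(1 / 2)) * (Real.sinh ρ * (-(3 / 2)) * u ^ (-(5 / 2) : ℝ))
          + Real.cosh ρ / Real.sinh ρ * (Real.sinh ρ * (-(1 / 2)) * u ^ (-(3 / 2) : ℝ)))
      / u ^ (-(1 / 2) : ℝ)
      = -2 * Real.cosh ρ / u + 3 / 2 * Real.sinh ρ ^ 2 / u ^ 2 := by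
    rw [h32, h52]
    field_simp
    ring
  rw [key, hc', hs2]
  field_simp
  ring
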